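/- Let γ > 1, c > 0, a > 0, and suppose f is continuous on [0,T) with f(t) ≥ a + c∫₀ᵗ f(s)^γ ds for all t < T. Then T ≤ t∗ where t∗ = ((γ−1)·c·a^(γ−1))^(−1), i.e., the maximal existence time is bounded by the blow-up time of the comparison ODE. -/
import Mathlib


open MeasureTheory intervalIntegral Set

/-- Blow-up time bound: if `f` is continuous on `[0,T)` and satisfies the superlinear
integral inequality `f t ≥ a + c ∫₀ᵗ f(s)^γ ds` for all `t < T` with `γ > 1`,
`c > 0`, `a > 0`, then `T ≤ t∗ = ((γ-1) c a^(γ-1))⁻¹`. -/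
theorem stmt_3 (T γ c a : ℝ) (f : ℝ → ℝ)
    (hγ : 1 < γ) (hc : 0 < c) (ha : 0 < a)
    (hf : ContinuousOn f (Set.Ico 0 T))
    (hineq : ∀ t, 0 ≤ t → t < T →
      a + c * ∫ s in (0:ℝ)..t, f s ^ γ ≤ f t) :
    T ≤ ((γ - 1) * c * a ^ (γ - 1))⁻¹ := by
  have hγ0 : (0:ℝ) ≤ γ := by linarith
  set g : ℝ → ℝ := fun s => f s ^ γ with hgdef
  have hgc : ContinuousOn g (Set.Ico 0 T) :=
    hf.rpow_const (fun x _ => Or.inr hγ0)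
  -- Step 1: f ≥ a/2 on [0, T)
  have h_half : ∀ t, 0 ≤ t → t < T → a / 2 < f t := by
    by_contra hcon
    push_neg at hcon
    obtain ⟨b, hb0, hbT, hbf⟩ := hcon
    have hIcc : Set.Icc 0 b ⊆ Set.Ico 0 T := fun x hx => ⟨hx.1, lt_of_le_of_lt hx.2 hbT⟩
    have hfc : ContinuousOn f (Set.Icc 0 b) := hf.mono hIcc
    set K := Set.Icc 0 b ∩ f ⁻¹' (Set.Iic (a / 2)) with hKdef
    have hKc : IsClosed K :=
      hfc.preimage_isClosed_of_isClosed isClosed_Icc isClosed_Iic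
    have hKcp : IsCompact K :=
      isCompact_Icc.of_isClosed_subset hKc Set.inter_subset_left
    have hKne : K.Nonempty := ⟨b, ⟨hb0, le_refl b⟩, hbf⟩
    obtain ⟨t₀, ht₀K, ht₀least⟩ := hKcp.exists_isLeast hKne
    obtain ⟨⟨ht₀0, ht₀b⟩, ht₀f⟩ := ht₀K
    have ht₀T : t₀ < T := lt_of_le_of_lt ht₀b hbT
    have ht₀f' : f t₀ ≤ a / 2 := ht₀f
    have ht₀pos : 0 < t₀ := by
      rcases ht₀0.lt_or_eq with h | h
      · exact h
      · exfalso
        have := hineq t₀ ht₀0 ht₀T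
        rw [← h, intervalIntegral.integral_same] at this
        simp at this
        rw [← h] at ht₀f'
        linarith
    have hlt : ∀ s, 0 ≤ s → s < t₀ → a / 2 < f s := by
      intro s hs0 hst
      by_contra h
      push_neg at h
      have hsK : s ∈ K := ⟨⟨hs0, le_trans hst.le ht₀b⟩, h⟩
      exact absurd (ht₀least hsK) (not_le.2 hst)
    -- f t₀ ≥ a/2 by limit from the left
    have hlim : Filter.Tendsto f (nhdsWithin t₀ (Set.Iio t₀)) (nhds (f t₀)) := by
      have h1 : ContinuousWithinAt f (Set.Ico 0 T) t₀ := hf t₀ ⟨ht₀0, ht₀T⟩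
      have h2 : nhdsWithin t₀ (Set.Iio t₀) ≤ nhdsWithin t₀ (Set.Ico 0 T) := by
        rw [← nhdsWithin_Ioo_eq_nhdsLT ht₀pos]
        exact nhdsWithin_mono _ (fun x hx => ⟨hx.1.le, hx.2.trans ht₀T⟩)
      exact h1.mono_left h2
    have hft₀ : a / 2 ≤ f t₀ := by
      refine ge_of_tendsto hlim ?_
      have h2 : ∀ᶠ s in nhdsWithin t₀ (Set.Iio t₀), 0 < s :=
        eventually_nhdsWithin_of_eventually_nhds (eventually_gt_nhds ht₀pos)
      have h3 : ∀ᶠ s in nhdsWithin t₀ (Set.Iio t₀), s < t₀ :=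
        eventually_mem_nhdsWithin
      filter_upwards [h2, h3] with s hs1 hs2
      exact (hlt s hs1.le hs2).le
    -- integral of g over [0, t₀] is nonneg
    have hI : 0 ≤ ∫ s in (0:ℝ)..t₀, g s := by
      refine intervalIntegral.integral_nonneg ht₀0 ?_
      intro u hu
      refine Real.rpow_nonneg ?_ γ
      rcases hu.2.lt_or_eq with h | h
      · linarith [hlt u hu.1 h]
      · rw [h]; linarith
    have := hineq t₀ ht₀0 ht₀T
    have hcI : 0 ≤ c * ∫ s in (0:ℝ)..t₀, g s := mul_nonneg hc.le hI
    linarith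
  -- Step 2: basic consequences
  have h_int_nonneg : ∀ t, 0 ≤ t → t < T → 0 ≤ ∫ s in (0:ℝ)..t, g s := by
    intro t ht htT
    refine intervalIntegral.integral_nonneg ht ?_
    intro u hu
    exact Real.rpow_nonneg (by linarith [h_half u hu.1 (lt_of_le_of_lt hu.2 htT)]) γ
  set F : ℝ → ℝ := fun t => a + c * ∫ s in (0:ℝ)..t, g s with hFdef
  have hFa : ∀ t, 0 ≤ t → t < T → a ≤ F t := by
    intro t ht htT
    have := h_int_nonneg t ht htT
    simp only [hFdef]
    nlinarith
  have hFf : ∀ t, 0 ≤ t → t < T → F t ≤ f t := fun t ht htT => hineq t ht htT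
  -- integrability
  have hint : ∀ t, 0 ≤ t → t < T → IntervalIntegrable g volume 0 t := by
    intro t ht htT
    apply ContinuousOn.intervalIntegrable
    rw [Set.uIcc_of_le ht]
    exact hgc.mono (fun x hx => ⟨hx.1, lt_of_le_of_lt hx.2 htT⟩)
  -- derivative of F on the interior
  have hFd : ∀ t ∈ Set.Ioo (0:ℝ) T, HasDerivAt F (c * g t) t := by
    intro t ht
    have hmeas : StronglyMeasurableAtFilter g (nhds t) volume :=
      (hgc.mono Set.Ioo_subset_Ico_self).stronglyMeasurableAtFilter isOpen_Ioo t ht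
    have hcont : ContinuousAt g t :=
      (hgc t ⟨ht.1.le, ht.2⟩).continuousAt (Ico_mem_nhds ht.1 ht.2)
    have hd : HasDerivAt (fun u => ∫ s in (0:ℝ)..u, g s) (g t) t :=
      intervalIntegral.integral_hasDerivAt_right (hint t ht.1.le ht.2) hmeas hcont
    simpa [hFdef] using (hd.const_mul c).const_add a
  -- the auxiliary function H
  set H : ℝ → ℝ := fun t => F t ^ (1 - γ) + (γ - 1) * c * t with hHdef
  have hHd : ∀ t ∈ Set.Ioo (0:ℝ) T,
      HasDerivAt H ((c * g t) * (1 - γ) * F t ^ (1 - γ - 1) + (γ - 1) * c) t := by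
    intro t ht
    have hF0 : F t ≠ 0 := by
      have := hFa t ht.1.le ht.2; linarith
    have h1 : HasDerivAt (fun u => F u ^ (1 - γ))
        ((c * g t) * (1 - γ) * F t ^ (1 - γ - 1)) t :=
      (hFd t ht).rpow_const (Or.inl hF0)
    have h2 : HasDerivAt (fun u => (γ - 1) * c * u) ((γ - 1) * c) t := by
      simpa using (hasDerivAt_id t).const_mul ((γ - 1) * c)
    exact h1.add h2
  -- the derivative of H is nonpositive
  have hHd_nonpos : ∀ t ∈ Set.Ioo (0:ℝ) T,
      (c * g t) * (1 - γ) * F t ^ (1 - γ - 1) + (γ - 1) * c ≤ 0 := by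
    intro t ht
    have hFpos : 0 < F t := lt_of_lt_of_le ha (hFa t ht.1.le ht.2)
    have hFft : F t ≤ f t := hFf t ht.1.le ht.2
    have hXY : F t ^ γ ≤ f t ^ γ := Real.rpow_le_rpow hFpos.le hFft hγ0
    have hXpos : 0 < F t ^ γ := Real.rpow_pos_of_pos hFpos γ
    have hrw : F t ^ (1 - γ - 1) = (F t ^ γ)⁻¹ := by
      rw [show (1 - γ - 1 : ℝ) = -γ by ring, Real.rpow_neg hFpos.le]
    rw [hrw]
    have h1 : (1:ℝ) ≤ f t ^ γ * (F t ^ γ)⁻¹ := by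
      rw [← div_eq_mul_inv, le_div_iff₀ hXpos, one_mul]
      exact hXY
    have h2 : (γ - 1) * c * 1 ≤ (γ - 1) * c * (f t ^ γ * (F t ^ γ)⁻¹) := by
      apply mul_le_mul_of_nonneg_left h1
      have hγ1 : 0 < γ - 1 := by linarith
      positivity
    simp only [hgdef]
    nlinarith
  -- main claim: every t in [0, T) is < the blow-up time value
  have main : ∀ t, 0 ≤ t → t < T → (γ - 1) * c * t < a ^ (1 - γ) := by
    intro t ht htT
    rcases ht.lt_or_eq with htpos | h0
    swap
    · rw [← h0]
      simp
      positivity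
    -- use antitonicity of H on [0, t]
    have hIccsub : Set.Icc 0 t ⊆ Set.Ico 0 T := fun x hx => ⟨hx.1, lt_of_le_of_lt hx.2 htT⟩
    have hFcont : ContinuousOn F (Set.Icc 0 t) := by
      have hprim : ContinuousOn (fun u => ∫ s in (0:ℝ)..u, g s) (Set.Icc 0 t) := by
        have hI : IntegrableOn g (Set.uIcc 0 t) volume := by
          rw [Set.uIcc_of_le ht]
          exact (hgc.mono hIccsub).integrableOn_compact isCompact_Icc
        have := intervalIntegral.continuousOn_primitive_interval hI
        rwa [Set.uIcc_of_le ht] at this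
      exact continuousOn_const.add (continuousOn_const.mul hprim)
    have hHcont : ContinuousOn H (Set.Icc 0 t) := by
      refine ContinuousOn.add ?_ ?_
      · refine hFcont.rpow_const ?_
        intro x hx
        left
        have := hFa x hx.1 (lt_of_le_of_lt hx.2 htT)
        linarith
      · exact (continuous_const.mul continuous_id).continuousOn
    have hintIoo : Set.Ioo (0:ℝ) t ⊆ Set.Ioo 0 T := fun x hx => ⟨hx.1, hx.2.trans htT⟩
    have hanti : AntitoneOn H (Set.Icc 0 t) := by
      refine antitoneOn_of_deriv_nonpos (convex_Icc 0 t) hHcont ?_ ?_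
      · rw [interior_Icc]
        intro x hx
        exact ((hHd x (hintIoo hx)).differentiableAt).differentiableWithinAt
      · rw [interior_Icc]
        intro x hx
        rw [(hHd x (hintIoo hx)).deriv]
        exact hHd_nonpos x (hintIoo hx)
    have hHt : H t ≤ H 0 :=
      hanti (Set.left_mem_Icc.2 ht) (Set.right_mem_Icc.2 ht) ht
    have hH0 : H 0 = a ^ (1 - γ) := by
      simp [hHdef, hFdef, intervalIntegral.integral_same]
    have hFt1γ : 0 < F t ^ (1 - γ) :=
      Real.rpow_pos_of_pos (lt_of_lt_of_le ha (hFa t ht htT)) _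
    rw [hH0] at hHt
    simp only [hHdef] at hHt
    linarith
  -- conclude
  by_contra hT
  push_neg at hT
  set ts : ℝ := ((γ - 1) * c * a ^ (γ - 1))⁻¹ with hts
  have haγ : 0 < a ^ (γ - 1) := Real.rpow_pos_of_pos ha _
  have hγ1 : 0 < γ - 1 := by linarith
  have hne : (γ - 1) * c ≠ 0 := ne_of_gt (by positivity)
  have htspos : 0 < ts := by rw [hts]; positivity
  have hkey := main ts htspos.le hT
  have heq : (γ - 1) * c * ts = a ^ (1 - γ) := by
    rw [show (1 - γ : ℝ) = -(γ - 1) by ring, Real.rpow_neg ha.le]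
    rw [hts, mul_inv, mul_inv_cancel_left₀ hne]
  rw [heq] at hkey
  exact lt_irrefl _ hkey
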